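/- arXiv:1205.0398 — 4 statements merged into one kernel-verified Lean document; each statement's English description precedes it below -/
import Mathlib

section
/- For nonzero polynomials f, g over a field K with a non-Archimedean valuation v, the tropicalisation of the product satisfies Trop(fg)(ξ) = Trop(f)(ξ) + Trop(g)(ξ) for all ξ ∈ ℝ^m, where Trop(f)(ξ) = min over monomials c_α x^α of f of (v(c_α) + ξ·α). -/
open MvPolynomial

section TropHelpers

lemma TropAux.v_one {K : Type*} [Field K] (v : K → ℝ)
    (hmul : ∀ a b : K, a ≠ 0 → b ≠ 0 → v (a * b) = v a + v b) : v (1 : K) = 0 := by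
  have h := hmul 1 1 one_ne_zero one_ne_zero
  simp only [mul_one] at h; linarith

lemma TropAux.v_neg {K : Type*} [Field K] (v : K → ℝ)
    (hmul : ∀ a b : K, a ≠ 0 → b ≠ 0 → v (a * b) = v a + v b)
    {a : K} (ha : a ≠ 0) : v (-a) = v a := by
  have hm1 : v (-1 : K) = 0 := by
    have h := hmul (-1) (-1) (by norm_num) (by norm_num)
    simp only [neg_mul_neg, one_mul] at h
    have := TropAux.v_one v hmul
    linarith
  have h := hmul (-1) a (by norm_num) ha
  rw [neg_one_mul] at h
  rw [h, hm1, zero_add]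

/-- If every nonzero term has valuation `> c`, the sum is zero or has valuation `> c`. -/
lemma TropAux.sum_of_lt {K : Type*} [Field K] (v : K → ℝ)
    (hadd : ∀ a b : K, a ≠ 0 → b ≠ 0 → a + b ≠ 0 → min (v a) (v b) ≤ v (a + b))
    {ι : Type*} (a : ι → K) (c : ℝ) :
    ∀ s : Finset ι, (∀ i ∈ s, a i ≠ 0 → c < v (a i)) →
      (∑ i ∈ s, a i = 0 ∨ (∑ i ∈ s, a i ≠ 0 ∧ c < v (∑ i ∈ s, a i))) := by
  intro s
  classical
  induction s using Finset.induction_on with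
  | empty => simp
  | @insert j s hj ih =>
    intro hs
    rw [Finset.sum_insert hj]
    have hrest := ih (fun i hi => hs i (Finset.mem_insert_of_mem hi))
    by_cases haj : a j = 0
    · rw [haj, zero_add]; exact hrest
    · have hcj : c < v (a j) := hs j (Finset.mem_insert_self j s) haj
      rcases hrest with h0 | ⟨hne, hlt⟩
      · rw [h0, add_zero]; exact Or.inr ⟨haj, hcj⟩
      · by_cases htot : a j + ∑ i ∈ s, a i = 0
        · exact Or.inl htot
        · refine Or.inr ⟨htot, lt_of_lt_of_le ?_ (hadd _ _ haj hne htot)⟩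
          exact lt_min hcj hlt

/-- If some nonzero term strictly dominates all other nonzero terms, the sum is nonzero
with valuation equal to that of the dominating term. -/
lemma TropAux.dominant {K : Type*} [Field K] (v : K → ℝ)
    (hmul : ∀ a b : K, a ≠ 0 → b ≠ 0 → v (a * b) = v a + v b)
    (hadd : ∀ a b : K, a ≠ 0 → b ≠ 0 → a + b ≠ 0 → min (v a) (v b) ≤ v (a + b))
    {ι : Type*} [DecidableEq ι] (a : ι → K) (s : Finset ι) (i₀ : ι) (hi₀ : i₀ ∈ s)
    (h0 : a i₀ ≠ 0) (hdom : ∀ j ∈ s, j ≠ i₀ → a j ≠ 0 → v (a i₀) < v (a j)) :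
    ∑ i ∈ s, a i ≠ 0 ∧ v (∑ i ∈ s, a i) = v (a i₀) := by
  rw [← Finset.add_sum_erase s a hi₀]
  have hrest := TropAux.sum_of_lt v hadd a (v (a i₀)) (s.erase i₀)
    (fun j hj => hdom j (Finset.mem_of_mem_erase hj) (Finset.ne_of_mem_erase hj))
  rcases hrest with h | ⟨hne, hlt⟩
  · rw [h, add_zero]; exact ⟨h0, rfl⟩
  · generalize hR : ∑ i ∈ s.erase i₀, a i = r at hne hlt ⊢
    have htot : a i₀ + r ≠ 0 := by
      intro h
      have hre : r = -a i₀ := by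
        have := add_eq_zero_iff_eq_neg.mp h
        rw [this]; ring
      rw [hre, TropAux.v_neg v hmul h0] at hlt
      exact lt_irrefl _ hlt
    refine ⟨htot, le_antisymm ?_ ?_⟩
    · by_contra hgt
      push_neg at hgt
      have hnr : (-r) ≠ 0 := neg_ne_zero.mpr hne
      have h2 := hadd (a i₀ + r) (-r) htot hnr (by simpa using h0)
      rw [add_neg_cancel_right, TropAux.v_neg v hmul hne] at h2
      have : v (a i₀) < min (v (a i₀ + r)) (v r) := lt_min hgt hlt
      linarith
    · have := hadd (a i₀) r h0 hne htot
      have hmin : min (v (a i₀)) (v r) = v (a i₀) := min_eq_left (le_of_lt hlt)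
      linarith [hmin ▸ this]

/-- If a sum is nonzero, some nonzero term has valuation `≤` that of the sum. -/
lemma TropAux.exists_le {K : Type*} [Field K] (v : K → ℝ)
    (hadd : ∀ a b : K, a ≠ 0 → b ≠ 0 → a + b ≠ 0 → min (v a) (v b) ≤ v (a + b))
    {ι : Type*} (a : ι → K) :
    ∀ s : Finset ι, ∑ i ∈ s, a i ≠ 0 →
      ∃ i ∈ s, a i ≠ 0 ∧ v (a i) ≤ v (∑ i ∈ s, a i) := by
  intro s
  classical
  induction s using Finset.induction_on with
  | empty => simp
  | @insert j s hj ih =>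
    intro hne
    rw [Finset.sum_insert hj] at hne ⊢
    by_cases haj : a j = 0
    · rw [haj, zero_add] at hne ⊢
      obtain ⟨i, hi, h⟩ := ih hne
      exact ⟨i, Finset.mem_insert_of_mem hi, h⟩
    · by_cases hrest : ∑ i ∈ s, a i = 0
      · rw [hrest, add_zero]
        exact ⟨j, Finset.mem_insert_self j s, haj, le_refl _⟩
      · have h := hadd _ _ haj hrest hne
        rcases le_total (v (a j)) (v (∑ i ∈ s, a i)) with hle | hle
        · exact ⟨j, Finset.mem_insert_self j s, haj, le_trans (by simp [min_eq_left hle]) h⟩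
        · obtain ⟨i, hi, hine, hvi⟩ := ih hrest
          exact ⟨i, Finset.mem_insert_of_mem hi, hine,
            le_trans hvi (le_trans (by simp [min_eq_right hle]) h)⟩

/-- Among the minimizers of `w` on a nonempty finset of exponents, there is a
lexicographically least one. -/
lemma TropAux.exists_lex_min {m : ℕ} (s : Finset (Fin m →₀ ℕ)) (w : (Fin m →₀ ℕ) → ℝ)
    (hs : s.Nonempty) :
    ∃ α₀ ∈ s, w α₀ = s.inf' hs w ∧
      ∀ α ∈ s, w α = s.inf' hs w → toLex α₀ ≤ toLex α := by
  classical
  obtain ⟨α₁, hα₁, hw₁⟩ := Finset.exists_mem_eq_inf' hs w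
  set F := (s.filter (fun α => w α = s.inf' hs w)).map
    ⟨toLex, toLex.injective⟩ with hF
  have hFne : F.Nonempty := ⟨toLex α₁, Finset.mem_map.mpr
    ⟨α₁, Finset.mem_filter.mpr ⟨hα₁, hw₁.symm⟩, rfl⟩⟩
  have hμ := Finset.min'_mem F hFne
  obtain ⟨a, ha, hae⟩ := Finset.mem_map.mp hμ
  rw [Finset.mem_filter] at ha
  refine ⟨a, ha.1, ha.2, fun α hα hwα => ?_⟩
  have hmem : toLex α ∈ F := Finset.mem_map.mpr ⟨α, Finset.mem_filter.mpr ⟨hα, hwα⟩, rfl⟩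
  calc toLex a = F.min' hFne := hae
    _ ≤ toLex α := Finset.min'_le F _ hmem

lemma TropAux.dot_add {m : ℕ} (ξ : Fin m → ℝ) (α β : Fin m →₀ ℕ) :
    (∑ j, ξ j * ((α + β) j : ℝ)) = (∑ j, ξ j * (α j : ℝ)) + ∑ j, ξ j * (β j : ℝ) := by
  rw [← Finset.sum_add_distrib]
  refine Finset.sum_congr rfl fun j _ => ?_
  rw [Finsupp.add_apply]
  push_cast
  ring

end TropHelpers

/-- The tropicalisation of a polynomial `f = Σ_α c_α x^α` with respect to a valuation
`v` on the coefficients: `Trop(f)(ξ) = min_{α : c_α ≠ 0} (v(c_α) + ξ·α)`.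
(Defined as `0` for the zero polynomial.) -/
noncomputable def Trop {K : Type*} [CommRing K] {m : ℕ} (v : K → ℝ)
    (f : MvPolynomial (Fin m) K) (ξ : Fin m → ℝ) : ℝ :=
  if h : f.support.Nonempty then
    f.support.inf' h (fun α => v (f.coeff α) + ∑ j, ξ j * (α j : ℝ))
  else 0

/-- Tropical Gauss's Lemma: for nonzero polynomials `f, g` over a field with a
non-Archimedean valuation `v`, `Trop(fg)(ξ) = Trop(f)(ξ) + Trop(g)(ξ)`. -/
theorem trop_mul {K : Type*} [Field K] {m : ℕ} (v : K → ℝ)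
    (hmul : ∀ a b : K, a ≠ 0 → b ≠ 0 → v (a * b) = v a + v b)
    (hadd : ∀ a b : K, a ≠ 0 → b ≠ 0 → a + b ≠ 0 → min (v a) (v b) ≤ v (a + b))
    (f g : MvPolynomial (Fin m) K) (hf : f ≠ 0) (hg : g ≠ 0) (ξ : Fin m → ℝ) :
    Trop v (f * g) ξ = Trop v f ξ + Trop v g ξ := by
  classical
  have hfg : f * g ≠ 0 := mul_ne_zero hf hg
  have hsf : f.support.Nonempty := support_nonempty.mpr hf
  have hsg : g.support.Nonempty := support_nonempty.mpr hg
  have hsfg : (f * g).support.Nonempty := support_nonempty.mpr hfg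
  rw [Trop, Trop, Trop, dif_pos hsfg, dif_pos hsf, dif_pos hsg]
  set Tf := f.support.inf' hsf (fun α => v (f.coeff α) + ∑ j, ξ j * (α j : ℝ)) with hTf
  set Tg := g.support.inf' hsg (fun α => v (g.coeff α) + ∑ j, ξ j * (α j : ℝ)) with hTg
  refine le_antisymm ?_ ?_
  · -- upper bound: find a monomial of f*g with weight exactly Tf + Tg
    obtain ⟨α₀, hα₀s, hα₀w, hα₀min⟩ := TropAux.exists_lex_min f.support
      (fun α => v (f.coeff α) + ∑ j, ξ j * (α j : ℝ)) hsf
    obtain ⟨β₀, hβ₀s, hβ₀w, hβ₀min⟩ := TropAux.exists_lex_min g.support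
      (fun α => v (g.coeff α) + ∑ j, ξ j * (α j : ℝ)) hsg
    rw [← hTf] at hα₀w hα₀min
    rw [← hTg] at hβ₀w hβ₀min
    have hc0 : f.coeff α₀ ≠ 0 := mem_support_iff.mp hα₀s
    have hd0 : g.coeff β₀ ≠ 0 := mem_support_iff.mp hβ₀s
    have hp₀ : ((α₀, β₀) : (Fin m →₀ ℕ) × (Fin m →₀ ℕ)) ∈ Finset.HasAntidiagonal.antidiagonal (α₀ + β₀) :=
      Finset.HasAntidiagonal.mem_antidiagonal.mpr rfl
    have hdom : ∀ p ∈ Finset.HasAntidiagonal.antidiagonal (α₀ + β₀),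
        p ≠ (α₀, β₀) → (fun p : (Fin m →₀ ℕ) × (Fin m →₀ ℕ) =>
          f.coeff p.1 * g.coeff p.2) p ≠ 0 →
        v (f.coeff α₀ * g.coeff β₀) < v (f.coeff p.1 * g.coeff p.2) := by
      intro p hp hpne hne
      have h1 : f.coeff p.1 ≠ 0 := left_ne_zero_of_mul hne
      have h2 : g.coeff p.2 ≠ 0 := right_ne_zero_of_mul hne
      rw [hmul _ _ h1 h2, hmul _ _ hc0 hd0]
      have hfin : Tf ≤ v (f.coeff p.1) + ∑ j, ξ j * (p.1 j : ℝ) := by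
        rw [hTf]; exact Finset.inf'_le _ (mem_support_iff.mpr h1)
      have hgin : Tg ≤ v (g.coeff p.2) + ∑ j, ξ j * (p.2 j : ℝ) := by
        rw [hTg]; exact Finset.inf'_le _ (mem_support_iff.mpr h2)
      have hsum : p.1 + p.2 = α₀ + β₀ := Finset.HasAntidiagonal.mem_antidiagonal.mp hp
      have hdots : (∑ j, ξ j * (p.1 j : ℝ)) + (∑ j, ξ j * (p.2 j : ℝ))
          = (∑ j, ξ j * (α₀ j : ℝ)) + ∑ j, ξ j * (β₀ j : ℝ) := by
        rw [← TropAux.dot_add ξ p.1 p.2, ← TropAux.dot_add ξ α₀ β₀, hsum]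
      -- totals: v c_p1 + v d_p2 ≥ v c_α₀ + v d_β₀, equality only if p = (α₀, β₀)
      by_cases heq : v (f.coeff p.1) + ∑ j, ξ j * (p.1 j : ℝ) = Tf ∧
          v (g.coeff p.2) + ∑ j, ξ j * (p.2 j : ℝ) = Tg
      · exfalso
        have hle1 : toLex α₀ ≤ toLex p.1 := hα₀min p.1 (mem_support_iff.mpr h1) heq.1
        have hle2 : toLex β₀ ≤ toLex p.2 := hβ₀min p.2 (mem_support_iff.mpr h2) heq.2
        have hsum' : toLex p.1 + toLex p.2 = toLex α₀ + toLex β₀ := by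
          rw [← toLex_add, ← toLex_add, hsum]
        have hmono : toLex p.1 + toLex β₀ ≤ toLex α₀ + toLex β₀ :=
          calc toLex p.1 + toLex β₀ ≤ toLex p.1 + toLex p.2 := add_le_add_right hle2 _
            _ = toLex α₀ + toLex β₀ := hsum'
        have he1 : toLex p.1 = toLex α₀ :=
          le_antisymm (le_of_add_le_add_right hmono) hle1
        have he2 : toLex p.2 = toLex β₀ := by
          have := hsum'
          rw [he1] at this
          exact add_left_cancel this
        exact hpne (Prod.ext (toLex.injective he1) (toLex.injective he2))
      · -- strict inequality in at least one factor
        rcases Decidable.not_and_iff_or_not.mp heq with hne1 | hne2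
        · have : Tf < v (f.coeff p.1) + ∑ j, ξ j * (p.1 j : ℝ) := lt_of_le_of_ne hfin (Ne.symm hne1)
          linarith [hα₀w ▸ (le_refl Tf), hβ₀w ▸ (le_refl Tg), hdots,
            congrArg id hα₀w, congrArg id hβ₀w]
        · have : Tg < v (g.coeff p.2) + ∑ j, ξ j * (p.2 j : ℝ) := lt_of_le_of_ne hgin (Ne.symm hne2)
          linarith [hdots, congrArg id hα₀w, congrArg id hβ₀w]
    obtain ⟨hcoeff_ne, hcoeff_v⟩ := TropAux.dominant v hmul hadd
      (fun p : (Fin m →₀ ℕ) × (Fin m →₀ ℕ) => f.coeff p.1 * g.coeff p.2)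
      (Finset.HasAntidiagonal.antidiagonal (α₀ + β₀)) (α₀, β₀) hp₀ (mul_ne_zero hc0 hd0) hdom
    have hmem : α₀ + β₀ ∈ (f * g).support := by
      rw [mem_support_iff, coeff_mul]
      exact hcoeff_ne
    have hle := Finset.inf'_le (fun γ : Fin m →₀ ℕ =>
      v ((f * g).coeff γ) + ∑ j, ξ j * (γ j : ℝ)) hmem
    have hval : v ((f * g).coeff (α₀ + β₀)) = v (f.coeff α₀) + v (g.coeff β₀) := by
      rw [coeff_mul]
      rw [hcoeff_v, hmul _ _ hc0 hd0]
    rw [hval, TropAux.dot_add ξ α₀ β₀] at hle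
    calc (f * g).support.inf' hsfg (fun α => v ((f * g).coeff α) + ∑ j, ξ j * (α j : ℝ))
        ≤ v (f.coeff α₀) + v (g.coeff β₀) + ((∑ j, ξ j * (α₀ j : ℝ)) + ∑ j, ξ j * (β₀ j : ℝ)) := hle
      _ = (v (f.coeff α₀) + ∑ j, ξ j * (α₀ j : ℝ)) + (v (g.coeff β₀) + ∑ j, ξ j * (β₀ j : ℝ)) := by ring
      _ = Tf + Tg := by rw [hα₀w, hβ₀w]
  · -- lower bound
    refine Finset.le_inf' _ _ fun γ hγ => ?_
    have hγne : (f * g).coeff γ ≠ 0 := mem_support_iff.mp hγ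
    have hγne' : ∑ p ∈ Finset.HasAntidiagonal.antidiagonal γ, f.coeff p.1 * g.coeff p.2 ≠ 0 := by
      rwa [← coeff_mul]
    obtain ⟨p, hp, hpne, hvle⟩ := TropAux.exists_le v hadd
      (fun p : (Fin m →₀ ℕ) × (Fin m →₀ ℕ) => f.coeff p.1 * g.coeff p.2)
      (Finset.HasAntidiagonal.antidiagonal γ) hγne'
    have h1 : f.coeff p.1 ≠ 0 := left_ne_zero_of_mul hpne
    have h2 : g.coeff p.2 ≠ 0 := right_ne_zero_of_mul hpne
    have hv : v (f.coeff p.1 * g.coeff p.2) = v (f.coeff p.1) + v (g.coeff p.2) :=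
      hmul _ _ h1 h2
    have hfin : Tf ≤ v (f.coeff p.1) + ∑ j, ξ j * (p.1 j : ℝ) := by
      rw [hTf]; exact Finset.inf'_le _ (mem_support_iff.mpr h1)
    have hgin : Tg ≤ v (g.coeff p.2) + ∑ j, ξ j * (p.2 j : ℝ) := by
      rw [hTg]; exact Finset.inf'_le _ (mem_support_iff.mpr h2)
    have hsum : p.1 + p.2 = γ := Finset.HasAntidiagonal.mem_antidiagonal.mp hp
    have hdots : (∑ j, ξ j * (γ j : ℝ))
        = (∑ j, ξ j * (p.1 j : ℝ)) + ∑ j, ξ j * (p.2 j : ℝ) := by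
      rw [← hsum, TropAux.dot_add]
    have hvγ : v (f.coeff p.1 * g.coeff p.2) ≤ v ((f * g).coeff γ) := by
      rwa [coeff_mul]
    rw [hv] at hvγ
    rw [hdots]
    linarith
end

section
/- Let φ̃ = (g̃, f̃_1, …, f̃_n) be a degree-d homogenisation of the rational map φ = (f_1/g, …, f_n/g). Then the image of Trop(φ̃) : ℝ^{m+1} → ℝ^{n+1} equals {0} × im(Trop(φ)) + ℝ·(1,…,1), where Trop(φ) : ℝ^m → ℝ^n has components Trop(f_i) − Trop(g). -/
open MvPolynomial

/-- The degree-`d` homogenisation `g̃(x_0,…,x_m) = x_0^d · g(x_1/x_0, …, x_m/x_0)`. -/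
noncomputable def homogenise {K : Type*} [CommRing K] {m : ℕ} (d : ℕ)
    (g : MvPolynomial (Fin m) K) : MvPolynomial (Fin (m + 1)) K :=
  ∑ α ∈ g.support,
    monomial (Finsupp.equivFunOnFinite.symm
        (Fin.cons (d - α.sum fun _ e => e) (fun j => α j)))
      (g.coeff α)

/-- The tropicalisation of the rational map `φ = (f_1/g, …, f_n/g)`:
componentwise `Trop(f_i) − Trop(g)`. -/
noncomputable def tropMap {K : Type*} [CommRing K] {m n : ℕ} (v : K → ℝ)
    (f : Fin n → MvPolynomial (Fin m) K) (g : MvPolynomial (Fin m) K)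
    (ξ : Fin m → ℝ) : Fin n → ℝ :=
  fun i => Trop v (f i) ξ - Trop v g ξ

/-- The tropicalisation of the degree-`d` homogenisation
`φ̃ = (g̃, f̃_1, …, f̃_n)` of `φ`, as a map `ℝ^{m+1} → ℝ^{n+1}`. -/
noncomputable def tropMapHom {K : Type*} [CommRing K] {m n : ℕ} (v : K → ℝ)
    (f : Fin n → MvPolynomial (Fin m) K) (g : MvPolynomial (Fin m) K) (d : ℕ)
    (ξ : Fin (m + 1) → ℝ) : Fin (n + 1) → ℝ :=
  Fin.cons (Trop v (homogenise d g) ξ) (fun i => Trop v (homogenise d (f i)) ξ)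


noncomputable def emb {m : ℕ} (d : ℕ) (α : Fin m →₀ ℕ) : Fin (m+1) →₀ ℕ :=
  Finsupp.equivFunOnFinite.symm (Fin.cons (d - α.sum fun _ e => e) (fun j => α j))

lemma emb_succ {m : ℕ} (d : ℕ) (α : Fin m →₀ ℕ) (j : Fin m) : emb d α j.succ = α j := by
  simp [emb, Finsupp.equivFunOnFinite]
  rfl

lemma emb_zero {m : ℕ} (d : ℕ) (α : Fin m →₀ ℕ) : emb d α 0 = d - α.sum fun _ e => e := by
  simp [emb, Finsupp.equivFunOnFinite]
  rfl

lemma emb_inj {m : ℕ} (d : ℕ) : Function.Injective (emb (m := m) d) := by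
  intro a b h
  ext j
  have := congrArg (fun F => F j.succ) h
  simpa [emb_succ] using this

lemma coeff_homogenise {K : Type*} [CommRing K] {m : ℕ} (d : ℕ)
    (g : MvPolynomial (Fin m) K) (α : Fin m →₀ ℕ) :
    (homogenise d g).coeff (emb d α) = g.coeff α := by
  rw [homogenise]
  rw [coeff_sum]
  by_cases hα : α ∈ g.support
  · rw [Finset.sum_eq_single α]
    · simp [coeff_monomial, emb]
    · intro b hb hne
      rw [coeff_monomial, if_neg]
      intro h
      exact hne (emb_inj d h)
    · intro h; exact absurd hα h
  · rw [Finset.sum_eq_zero]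
    · simp only [notMem_support_iff] at hα
      exact hα.symm
    · intro b hb
      rw [coeff_monomial, if_neg]
      intro h
      exact hα (by rwa [emb_inj d h] at hb)

lemma support_homogenise {K : Type*} [CommRing K] {m : ℕ} (d : ℕ)
    (g : MvPolynomial (Fin m) K) :
    (homogenise d g).support = g.support.image (emb d) := by
  ext β
  simp only [Finset.mem_image, mem_support_iff]
  constructor
  · intro hβ
    by_contra h
    push_neg at h
    apply hβ
    rw [homogenise, coeff_sum, Finset.sum_eq_zero]
    intro b hb
    rw [coeff_monomial, if_neg]
    intro he
    exact h b (by simpa using hb) he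
  · rintro ⟨a, ha, rfl⟩
    rw [coeff_homogenise]; exact ha

lemma add_inf'_real {ι : Type*} (c : ℝ) (s : Finset ι) (hs : s.Nonempty) (f : ι → ℝ) :
    c + s.inf' hs f = s.inf' hs fun i => c + f i := by
  induction hs using Finset.Nonempty.cons_induction with
  | singleton => simp
  | cons a s h hs ih => rw [Finset.inf'_cons, Finset.inf'_cons, ← ih, min_add_add_left]; exact hs

lemma Trop_homogenise {K : Type*} [CommRing K] {m : ℕ} (v : K → ℝ)
    (g : MvPolynomial (Fin m) K) (hg : g ≠ 0) (d : ℕ) (hdeg : g.totalDegree ≤ d)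
    (ξ : Fin (m + 1) → ℝ) :
    Trop v (homogenise d g) ξ
      = d * ξ 0 + Trop v g (fun j => ξ j.succ - ξ 0) := by
  have hgs : g.support.Nonempty := support_nonempty.mpr hg
  have hhs : (homogenise d g).support.Nonempty := by
    rw [support_homogenise]; exact hgs.image _
  rw [Trop, dif_pos hhs, Trop, dif_pos hgs]
  have h1 : (homogenise d g).support.inf' hhs
      (fun β => v ((homogenise d g).coeff β) + ∑ j, ξ j * (β j : ℝ))
      = g.support.inf' hgs
      (fun α => v ((homogenise d g).coeff (emb d α)) + ∑ j, ξ j * ((emb d α) j : ℝ)) := by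
    rw [Finset.inf'_congr hhs (support_homogenise d g) (fun _ _ => rfl)]
    exact Finset.inf'_image _ _
  rw [h1, add_inf'_real]
  apply Finset.inf'_congr hgs rfl
  intro α hα
  have hle : (α.sum fun _ e => e) ≤ d := le_trans (MvPolynomial.le_totalDegree hα) hdeg
  rw [coeff_homogenise, Fin.sum_univ_succ]
  simp only [emb_zero, emb_succ]
  have hcast : ((d - α.sum fun _ e => e : ℕ) : ℝ) = (d : ℝ) - ((α.sum fun _ e => e : ℕ) : ℝ) := by
    rw [Nat.cast_sub hle]
  have hsum : ((α.sum fun _ e => e : ℕ) : ℝ) = ∑ j, (α j : ℝ) := by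
    rw [Finsupp.sum_fintype]
    · push_cast; rfl
    · intro; rfl
  rw [hcast, hsum]
  simp only [sub_mul, mul_sub]
  rw [Finset.sum_sub_distrib, Finset.mul_sum]
  ring

/-- Homogenisation Lemma: the image of `Trop(φ̃)` equals
`{0} × im(Trop(φ)) + ℝ·(1,…,1)`. -/
theorem range_tropMapHom {K : Type*} [Field K] {m n : ℕ} (v : K → ℝ)
    (f : Fin n → MvPolynomial (Fin m) K) (g : MvPolynomial (Fin m) K)
    (hg : g ≠ 0) (hf : ∀ i, f i ≠ 0) (d : ℕ) (hd : 0 < d)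
    (hdegg : g.totalDegree ≤ d) (hdegf : ∀ i, (f i).totalDegree ≤ d) :
    Set.range (tropMapHom v f g d) =
      {η | ∃ ζ ∈ Set.range (tropMap v f g), ∃ c : ℝ,
        η = Fin.cons 0 ζ + fun _ => c} := by
  ext η
  simp only [Set.mem_range, Set.mem_setOf_eq]
  constructor
  · rintro ⟨ξ, rfl⟩
    refine ⟨tropMap v f g (fun j => ξ j.succ - ξ 0), ⟨_, rfl⟩,
      d * ξ 0 + Trop v g (fun j => ξ j.succ - ξ 0), ?_⟩
    funext i
    refine Fin.cases ?_ ?_ i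
    · simp [tropMapHom, Trop_homogenise v g hg d hdegg]
    · intro i
      simp only [tropMapHom, tropMap, Fin.cons_succ, Pi.add_apply,
        Trop_homogenise v (f i) (hf i) d (hdegf i)]
      ring
  · rintro ⟨ζ, ⟨ξ', rfl⟩, c, rfl⟩
    set t := (c - Trop v g ξ') / d with ht
    have hdt : (d : ℝ) * t + Trop v g ξ' = c := by
      rw [ht]; field_simp; ring
    refine ⟨Fin.cons t (fun j => ξ' j + t), ?_⟩
    have hξ : (fun j : Fin m =>
        (Fin.cons t (fun j => ξ' j + t) : Fin (m + 1) → ℝ) j.succ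
          - (Fin.cons t (fun j => ξ' j + t) : Fin (m + 1) → ℝ) 0) = ξ' := by
      funext j; simp
    funext i
    refine Fin.cases ?_ ?_ i
    · simp only [tropMapHom, Fin.cons_zero, Pi.add_apply,
        Trop_homogenise v g hg d hdegg, hξ]
      simpa using hdt
    · intro i
      simp only [tropMapHom, tropMap, Fin.cons_succ, Pi.add_apply,
        Fin.cons_zero, Trop_homogenise v (f i) (hf i) d (hdegf i), add_sub_cancel_right]
      linarith
end

section
/- Let X ⊆ T^2 be the line defined by y = x + 1 and let ψ : T^2 ⇢ X be the rational map (s,u) ↦ ((1+s)/(u−s), (1+u)/(u−s)). Then the image of Trop(ψ) : ℝ^2 → ℝ^2 equals Trop(X), which is the tripod {(λ,0) : λ ≥ 0} ∪ {(0,λ) : λ ≥ 0} ∪ {(λ,λ) : λ ≤ 0}. Hence X is tropically unirational. -/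
open MvPolynomial

/-- The tripod: the tropical variety of the line `y = x + 1` in `T²`. -/
def tripod : Set (ℝ × ℝ) :=
  {p | (∃ l : ℝ, 0 ≤ l ∧ p = (l, 0)) ∨ (∃ l : ℝ, 0 ≤ l ∧ p = (0, l)) ∨
       (∃ l : ℝ, l ≤ 0 ∧ p = (l, l))}

set_option linter.unusedVariables false

lemma trop_binom {K : Type*} [Field K] (v : K → ℝ) {a b : Fin 2 →₀ ℕ} (hab : a ≠ b)
    {c d : K} (hc : c ≠ 0) (hd : d ≠ 0) (ξ : Fin 2 → ℝ) :
    Trop v (monomial a c + monomial b d) ξ =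
      min (v c + ∑ j, ξ j * (a j : ℝ)) (v d + ∑ j, ξ j * (b j : ℝ)) := by
  have hca : (monomial a c + monomial b d).coeff a = c := by
    simp [coeff_monomial, hab.symm]
  have hcb : (monomial a c + monomial b d).coeff b = d := by
    simp [coeff_monomial, hab]
  have hsupp : (monomial a c + monomial b d).support = {a, b} := by
    ext α
    simp only [mem_support_iff, coeff_add, coeff_monomial, Finset.mem_insert,
      Finset.mem_singleton]
    by_cases h1 : a = α <;> by_cases h2 : b = α
    · exact absurd (h1.trans h2.symm) hab
    · simp [h1, h2, hc]
    · simp [h1, h2, hd]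
    · simp [h1, h2, Ne.symm h1, Ne.symm h2]
  have hne : (monomial a c + monomial b d).support.Nonempty := by
    rw [hsupp]; exact ⟨a, by simp⟩
  rw [Trop, dif_pos hne]
  have : (monomial a c + monomial b d).support.inf'
      hne (fun α => v ((monomial a c + monomial b d).coeff α) + ∑ j, ξ j * (α j : ℝ)) =
      ({a, b} : Finset _).inf' ⟨a, by simp⟩
      (fun α => v ((monomial a c + monomial b d).coeff α) + ∑ j, ξ j * (α j : ℝ)) := by
    congr 1
  rw [this, Finset.inf'_insert, Finset.inf'_singleton, hca, hcb]
  exact Finset.singleton_nonempty b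

/-- For the rational map `ψ : T² ⇢ X`, `(s,u) ↦ ((1+s)/(u−s), (1+u)/(u−s))` onto
the line `X = {y = x + 1}`, the image of `Trop(ψ)` equals `Trop(X)`, the tripod.
Hence `X` is tropically unirational. Here `s, u` are the variables `X 0, X 1`. -/
theorem range_trop_line_reparam {K : Type*} [Field K] (v : K → ℝ)
    (hmul : ∀ a b : K, a ≠ 0 → b ≠ 0 → v (a * b) = v a + v b)
    (hadd : ∀ a b : K, a ≠ 0 → b ≠ 0 → a + b ≠ 0 → min (v a) (v b) ≤ v (a + b)) :
    Set.range (fun ξ : Fin 2 → ℝ =>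
        ((Trop v (1 + X 0 : MvPolynomial (Fin 2) K) ξ -
            Trop v (X 1 - X 0 : MvPolynomial (Fin 2) K) ξ,
          Trop v (1 + X 1 : MvPolynomial (Fin 2) K) ξ -
            Trop v (X 1 - X 0 : MvPolynomial (Fin 2) K) ξ) : ℝ × ℝ)) =
      tripod := by
  have hv1 : v 1 = 0 := by
    have := hmul 1 1 one_ne_zero one_ne_zero
    rw [one_mul] at this; linarith
  have hvn1 : v (-1 : K) = 0 := by
    have := hmul (-1) (-1) (neg_ne_zero.mpr one_ne_zero) (neg_ne_zero.mpr one_ne_zero)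
    rw [neg_mul_neg, one_mul, hv1] at this; linarith
  have h0 : ∀ i : Fin 2, (0 : Fin 2 →₀ ℕ) ≠ Finsupp.single i 1 := fun i h => by
    simpa using DFunLike.congr_fun h i
  have h10 : (Finsupp.single 1 1 : Fin 2 →₀ ℕ) ≠ Finsupp.single 0 1 := fun h => by
    simpa using DFunLike.congr_fun h 1
  have e1 : ∀ ξ : Fin 2 → ℝ, ∀ i : Fin 2,
      Trop v (1 + X i : MvPolynomial (Fin 2) K) ξ = min 0 (ξ i) := by
    intro ξ i
    have h : (1 + X i : MvPolynomial (Fin 2) K) =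
        monomial 0 1 + monomial (Finsupp.single i 1) 1 := by
      simp [X, monomial_zero']
    rw [h, trop_binom v (h0 i) one_ne_zero one_ne_zero]
    fin_cases i <;> simp [hv1, Fin.sum_univ_two, Finsupp.single_apply]
  have e3 : ∀ ξ : Fin 2 → ℝ,
      Trop v (X 1 - X 0 : MvPolynomial (Fin 2) K) ξ = min (ξ 1) (ξ 0) := by
    intro ξ
    have h : (X 1 - X 0 : MvPolynomial (Fin 2) K) =
        monomial (Finsupp.single 1 1) 1 + monomial (Finsupp.single 0 1) (-1) := by
      rw [sub_eq_add_neg]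
      simp [X]
    rw [h, trop_binom v h10 one_ne_zero (neg_ne_zero.mpr one_ne_zero)]
    simp [hv1, hvn1, Fin.sum_univ_two, Finsupp.single_apply]
  have hfun : (fun ξ : Fin 2 → ℝ =>
        ((Trop v (1 + X 0 : MvPolynomial (Fin 2) K) ξ -
            Trop v (X 1 - X 0 : MvPolynomial (Fin 2) K) ξ,
          Trop v (1 + X 1 : MvPolynomial (Fin 2) K) ξ -
            Trop v (X 1 - X 0 : MvPolynomial (Fin 2) K) ξ) : ℝ × ℝ)) =
      fun ξ : Fin 2 → ℝ =>
        (min 0 (ξ 0) - min (ξ 1) (ξ 0), min 0 (ξ 1) - min (ξ 1) (ξ 0)) := by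
    funext ξ; rw [e1, e1, e3]
  rw [hfun]
  ext p
  simp only [Set.mem_range, tripod, Set.mem_setOf_eq]
  constructor
  · rintro ⟨ξ, rfl⟩
    rcases le_total (ξ 0) (ξ 1) with h | h
    · rcases le_total 0 (ξ 0) with hs | hs
      · right; right
        refine ⟨-ξ 0, by linarith, ?_⟩
        rw [min_eq_left hs, min_eq_right h, min_eq_left (hs.trans h)]
        norm_num
      · right; left
        refine ⟨min 0 (ξ 1) - ξ 0, by have := le_min hs h; linarith, ?_⟩
        rw [min_eq_right hs, min_eq_right h]
        norm_num
    · rcases le_total 0 (ξ 1) with hs | hs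
      · right; right
        refine ⟨-ξ 1, by linarith, ?_⟩
        rw [min_eq_left (hs.trans h), min_eq_left h, min_eq_left hs]
        norm_num
      · left
        refine ⟨min 0 (ξ 0) - ξ 1, by have := le_min hs h; linarith, ?_⟩
        rw [min_eq_left h, min_eq_right hs]
        norm_num
  · rintro (⟨l, hl, rfl⟩ | ⟨l, hl, rfl⟩ | ⟨l, hl, rfl⟩)
    · refine ⟨![0, -l], ?_⟩
      simp only [Matrix.cons_val_zero, Matrix.cons_val_one, Matrix.head_cons]
      rw [min_self, min_eq_left (neg_nonpos.mpr hl), min_eq_right (neg_nonpos.mpr hl)]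
      norm_num
    · refine ⟨![-l, 0], ?_⟩
      simp only [Matrix.cons_val_zero, Matrix.cons_val_one, Matrix.head_cons]
      rw [min_eq_right (neg_nonpos.mpr hl), min_self 0]
      norm_num
    · refine ⟨![-l, -l], ?_⟩
      simp only [Matrix.cons_val_zero, Matrix.cons_val_one, Matrix.head_cons]
      rw [min_eq_left (neg_nonneg.mpr hl), min_self]
      norm_num
end

section
/- Define φ : T^m × T^m × T^n × T^n → T^{m×n} by φ(u,x,v,y) = diag(u)(x·1^T + 1·y^T)diag(v), i.e. the matrix with entries u_i v_j (x_i + y_j). Then every matrix in the image of φ has rank at most 2, and the image is dense in the variety of m×n matrices of rank at most 2 (for m,n ≥ 2). -/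
open MvPolynomial

/-- The matrix `φ(u,x,v,y) = diag(u)(x·1ᵀ + 1·yᵀ)diag(v)`, with entries
`u_i v_j (x_i + y_j)`. -/
def phiRank2 {K : Type*} [Field K] {m n : ℕ} (u x : Fin m → Kˣ)
    (v y : Fin n → Kˣ) : Matrix (Fin m) (Fin n) K :=
  Matrix.of fun i j => (u i : K) * (v j : K) * ((x i : K) + (y j : K))

/-- Summing a `dite` over `Fin 2` when the condition cuts it to `Fin r`, `r ≤ 2`. -/
lemma sum_dite_fin_two {M : Type*} [AddCommMonoid M] {r : ℕ} (h : r ≤ 2) (f : Fin r → M) :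
    (∑ k : Fin 2, if hk : (k : ℕ) < r then f ⟨k, hk⟩ else 0) = ∑ k, f k := by
  interval_cases r <;> simp [Fin.sum_univ_two, Fin.sum_univ_succ]

/-- A matrix of rank at most two decomposes as a sum of two outer products. -/
lemma rank_le_two_decomp {K : Type*} [Field K] {m n : ℕ} (M : Matrix (Fin m) (Fin n) K)
    (h : M.rank ≤ 2) :
    ∃ (a c : Fin m → K) (b d : Fin n → K), ∀ i j, M i j = a i * b j + c i * d j := by
  classical
  set W := LinearMap.range M.mulVecLin with hW
  have hfr : Module.finrank K W ≤ 2 := h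
  have colmem : ∀ j, (fun i => M i j) ∈ W := by
    intro j
    refine ⟨Pi.single j 1, ?_⟩
    ext i
    simp [Matrix.mulVecLin_apply, Matrix.mulVec_single]
  let b := Module.finBasis K W
  let col : Fin n → W := fun j => ⟨fun i => M i j, colmem j⟩
  refine ⟨fun i => if hk : (0 : ℕ) < Module.finrank K W then ((b ⟨0, hk⟩ : Fin m → K)) i else 0,
    fun i => if hk : (1 : ℕ) < Module.finrank K W then ((b ⟨1, hk⟩ : Fin m → K)) i else 0,
    fun j => if hk : (0 : ℕ) < Module.finrank K W then b.repr (col j) ⟨0, hk⟩ else 0,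
    fun j => if hk : (1 : ℕ) < Module.finrank K W then b.repr (col j) ⟨1, hk⟩ else 0, ?_⟩
  intro i j
  have hsum : (∑ k : Fin 2, if hk : (k : ℕ) < Module.finrank K W then
      b.repr (col j) ⟨k, hk⟩ * (b ⟨(k : ℕ), hk⟩ : Fin m → K) i else 0)
      = ∑ k, b.repr (col j) k * (b k : Fin m → K) i :=
    sum_dite_fin_two hfr (fun k => b.repr (col j) k * (b k : Fin m → K) i)
  have hrep : (∑ k, b.repr (col j) k • b k) = col j := b.sum_repr (col j)
  have hrep' : (∑ k, b.repr (col j) k * (b k : Fin m → K) i) = M i j := by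
    have := congrArg (fun w : W => (w : Fin m → K) i) hrep
    beta_reduce at this
    rw [Submodule.coe_sum, Finset.sum_apply] at this
    simpa only [Submodule.coe_smul, Pi.smul_apply, smul_eq_mul] using this
  rw [← hrep', ← hsum, Fin.sum_univ_two]
  simp only [Fin.val_zero, Fin.val_one]
  split_ifs <;> ring

/-- A multivariate polynomial over an infinite field vanishing at all points with
all coordinates nonzero is zero. -/
lemma eq_zero_of_eval_nonzero {K : Type*} [Field K] [Infinite K] {σ : Type*} [Fintype σ]
    (G : MvPolynomial σ K) (h : ∀ p : σ → K, (∀ s, p s ≠ 0) → eval p G = 0) : G = 0 := by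
  classical
  have hprod : (G * ∏ s : σ, X s) = 0 := by
    apply MvPolynomial.funext
    intro p
    simp only [map_mul, map_prod, eval_X, map_zero]
    by_cases hp : ∀ s, p s ≠ 0
    · rw [h p hp, zero_mul]
    · push_neg at hp
      obtain ⟨s, hs⟩ := hp
      rw [Finset.prod_eq_zero (Finset.mem_univ s) hs, mul_zero]
  rcases mul_eq_zero.mp hprod with hG | hX
  · exact hG
  · exact absurd hX (Finset.prod_ne_zero_iff.mpr fun s _ => X_ne_zero s)

lemma eval_bind₁' {K : Type*} [CommSemiring K] {σ τ : Type*} (f : σ → K)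
    (g : τ → MvPolynomial σ K) (φ : MvPolynomial τ K) :
    eval f (bind₁ g φ) = eval (fun i => eval f (g i)) φ := by
  exact aeval_bind₁ f g φ

/-- Every matrix `diag(u)(x·1ᵀ + 1·yᵀ)diag(v)` has rank at most 2, and (for
`m, n ≥ 2` over an algebraically closed field) the image of this map is Zariski
dense in the variety of `m × n` matrices of rank at most 2: any polynomial
vanishing on the image vanishes on every matrix of rank at most 2. -/
theorem phiRank2_rank_le_two_and_dominant {K : Type*} [Field K] [IsAlgClosed K]
    {m n : ℕ} (hm : 2 ≤ m) (hn : 2 ≤ n) :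
    (∀ (u x : Fin m → Kˣ) (v y : Fin n → Kˣ), (phiRank2 u x v y).rank ≤ 2) ∧
    (∀ F : MvPolynomial (Fin m × Fin n) K,
      (∀ (u x : Fin m → Kˣ) (v y : Fin n → Kˣ),
        eval (fun ij => phiRank2 u x v y ij.1 ij.2) F = 0) →
      ∀ M : Matrix (Fin m) (Fin n) K, M.rank ≤ 2 →
        eval (fun ij => M ij.1 ij.2) F = 0) := by
  classical
  constructor
  · intro u x v y
    have hfac : phiRank2 u x v y =
        (Matrix.of fun i (k : Fin 2) => if k = 0 then (u i : K) * (x i : K) else (u i : K)) *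
        (Matrix.of fun (k : Fin 2) j => if k = 0 then (v j : K) else (v j : K) * (y j : K)) := by
      ext i j
      simp [phiRank2, Matrix.mul_apply, Fin.sum_univ_two]
      ring
    rw [hfac]
    exact le_trans (Matrix.rank_mul_le_right _ _) (Matrix.rank_le_height _)
  · intro F hF M hM
    -- variables: inl inl = a (Fin m), inl inr = c (Fin m), inr inl = b (Fin n), inr inr = d
    set G : MvPolynomial ((Fin m ⊕ Fin m) ⊕ (Fin n ⊕ Fin n)) K :=
      bind₁ (fun ij : Fin m × Fin n =>
        X (Sum.inl (Sum.inl ij.1)) * X (Sum.inr (Sum.inl ij.2)) +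
        X (Sum.inl (Sum.inr ij.1)) * X (Sum.inr (Sum.inr ij.2))) F with hG
    have hGzero : G = 0 := by
      apply eq_zero_of_eval_nonzero
      intro p hp
      rw [hG, eval_bind₁']
      have key : (fun ij : Fin m × Fin n =>
          eval p (X (Sum.inl (Sum.inl ij.1)) * X (Sum.inr (Sum.inl ij.2)) +
            X (Sum.inl (Sum.inr ij.1)) * X (Sum.inr (Sum.inr ij.2)))) =
          (fun ij : Fin m × Fin n =>
            phiRank2 (fun i => Units.mk0 _ (hp (Sum.inl (Sum.inr i))))
              (fun i => Units.mk0 (p (Sum.inl (Sum.inl i)) / p (Sum.inl (Sum.inr i)))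
                (div_ne_zero (hp _) (hp _)))
              (fun j => Units.mk0 _ (hp (Sum.inr (Sum.inl j))))
              (fun j => Units.mk0 (p (Sum.inr (Sum.inr j)) / p (Sum.inr (Sum.inl j)))
                (div_ne_zero (hp _) (hp _))) ij.1 ij.2) := by
        funext ij
        simp only [map_add, map_mul, eval_X, phiRank2, Matrix.of_apply, Units.val_mk0]
        have h1 : p (Sum.inl (Sum.inr ij.1)) ≠ 0 := hp _
        have h2 : p (Sum.inr (Sum.inl ij.2)) ≠ 0 := hp _
        field_simp
      rw [key]
      exact hF _ _ _ _
    obtain ⟨a, c, b, d, hdec⟩ := rank_le_two_decomp M hM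
    have := congrArg (eval (fun s : (Fin m ⊕ Fin m) ⊕ (Fin n ⊕ Fin n) =>
      Sum.elim (Sum.elim a c) (Sum.elim b d) s)) hGzero
    rw [hG, eval_bind₁', map_zero] at this
    have h2 : (fun ij : Fin m × Fin n => M ij.1 ij.2) =
        (fun ij : Fin m × Fin n =>
          eval (fun s : (Fin m ⊕ Fin m) ⊕ (Fin n ⊕ Fin n) =>
            Sum.elim (Sum.elim a c) (Sum.elim b d) s)
            (X (Sum.inl (Sum.inl ij.1)) * X (Sum.inr (Sum.inl ij.2)) +
              X (Sum.inl (Sum.inr ij.1)) * X (Sum.inr (Sum.inr ij.2)))) := by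
      funext ij
      simp [hdec ij.1 ij.2]
    rw [h2]
    exact this
end
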